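/- Let p be a prime, k ≥ 1, and let w be a recurrent infinite word over ℕ. Then there exists m ≥ 1 such that A_{w_m} is congruent to the identity matrix modulo p^k, i.e. φ_k(A_{w_m}) = Id over ℤ/p^kℤ. -/

import Mathlib

open Matrix Filter

/-- The matrix `A_a = [[0,1],[1,a]]` associated to a letter `a`. -/
def Amat (a : ℕ) : Matrix (Fin 2) (Fin 2) ℤ := !![0, 1; 1, (a : ℤ)]

/-- The matrix `A_u` associated to a finite word `u` (product of the `A_a`). -/
def Aword (u : List ℕ) : Matrix (Fin 2) (Fin 2) ℤ := (u.map Amat).prod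

/-- The prefix of length `n` of an infinite word `w`. -/
def wordPrefix (w : ℕ → ℕ) (n : ℕ) : List ℕ := (List.range n).map w

/-- The left shift `T^m w` of an infinite word. -/
def shiftW (w : ℕ → ℕ) (m : ℕ) : ℕ → ℕ := fun i => w (m + i)

/-- Distance from a real number to the nearest integer. -/
noncomputable def distNearestInt (t : ℝ) : ℝ := |t - round t|

/-- `q ∈ PBad_ε` : `q` is a `p`-adically badly approximable vector with constant `ε`. -/
def PBadE (p : ℕ) [Fact p.Prime] (ε : ℝ) (q : Fin 2 → ℚ_[p]) : Prop :=
  ∀ a b : ℤ, ¬(a = 0 ∧ b = 0) →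
    ε / max ((a : ℝ) ^ 2) ((b : ℝ) ^ 2) ≤
      ‖(a : ℚ_[p]) * q 0 + (b : ℚ_[p]) * q 1‖ / max ‖q 0‖ ‖q 1‖

/-- An integer matrix viewed as a matrix over `ℚ_[p]`. -/
noncomputable def matQ (p : ℕ) [Fact p.Prime] (M : Matrix (Fin 2) (Fin 2) ℤ) :
    Matrix (Fin 2) (Fin 2) ℚ_[p] := M.map Int.cast

/-- `(w, y) ∈ LMad_ε`. -/
def LMadE (p : ℕ) [Fact p.Prime] (ε : ℝ) (w : ℕ → ℕ) (y : Fin 2 → ℚ_[p]) : Prop :=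
  (∀ n, 1 ≤ w n ∧ (w n : ℤ) ≤ ⌊ε⁻¹⌋ + 1) ∧
  ∀ n : ℕ, PBadE p ε (Matrix.mulVec (matQ p (Aword (wordPrefix w n))ᵀ) y)

/-- `(w, y) ∈ LMad`. -/
def LMad (p : ℕ) [Fact p.Prime] (w : ℕ → ℕ) (y : Fin 2 → ℚ_[p]) : Prop :=
  ∃ ε > 0, LMadE p ε w y

/-- The projective distance `d` on nonzero vectors of `ℚ_[p]²`. -/
noncomputable def pdist (p : ℕ) [Fact p.Prime] (u v : Fin 2 → ℚ_[p]) : ℝ :=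
  ‖u 0 * v 1 - u 1 * v 0‖ / (max ‖u 0‖ ‖u 1‖ * max ‖v 0‖ ‖v 1‖)

/-- `q ∈ B_k(w, y)` : `q` is `p^{-k}`-close to some `(A_{w_n})ᵀ y`. -/
def inBk (p : ℕ) [Fact p.Prime] (k : ℕ) (w : ℕ → ℕ) (y : Fin 2 → ℚ_[p])
    (q : Fin 2 → ℚ_[p]) : Prop :=
  q ≠ 0 ∧ ∃ n : ℕ,
    pdist p q (Matrix.mulVec (matQ p (Aword (wordPrefix w n))ᵀ) y) ≤ (p : ℝ) ^ (-(k : ℤ))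

/-- `U_k(w)` : set of reductions mod `p^k` of the matrices of all prefixes of `w`. -/
def Uk (p k : ℕ) (w : ℕ → ℕ) : Set (Matrix (Fin 2) (Fin 2) (ZMod (p ^ k))) :=
  { M | ∃ n : ℕ, M = (Aword (wordPrefix w n)).map Int.cast }

/-- The finite word `u` occurs in `w` at position `m`. -/
def occursAt (w : ℕ → ℕ) (u : List ℕ) (m : ℕ) : Prop :=
  u = (List.range u.length).map fun i => w (m + i)

/-- `u` is a factor of the infinite word `w`. -/
def IsFactor (u : List ℕ) (w : ℕ → ℕ) : Prop := ∃ m, occursAt w u m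

/-- `w` is recurrent: every factor occurs infinitely often. -/
def Recurrent (w : ℕ → ℕ) : Prop :=
  ∀ u : List ℕ, IsFactor u w → ∀ M : ℕ, ∃ m, M ≤ m ∧ occursAt w u m

/-- `w` is uniformly recurrent: recurrent with bounded gaps between occurrences. -/
def UniformlyRecurrent (w : ℕ → ℕ) : Prop :=
  Recurrent w ∧
    ∀ u : List ℕ, IsFactor u w →
      ∃ d : ℕ, ∀ m : ℕ, ∃ m', m ≤ m' ∧ m' ≤ m + d ∧ occursAt w u m'

/-- The complexity `P(w, n)` : number of distinct factors of `w` of length `n`. -/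
noncomputable def complexity (w : ℕ → ℕ) (n : ℕ) : ℕ :=
  Set.ncard { u : List ℕ | u.length = n ∧ IsFactor u w }

/-- `a` is the sequence of partial quotients of the continued fraction expansion of `x`,
obtained by iterating the Gauss map. -/
def IsCFSeq (x : ℝ) (a : ℕ → ℕ) : Prop :=
  ∃ ξ : ℕ → ℝ, ξ 0 = x ∧
    ∀ n, (0 < ξ n ∧ ξ n < 1) ∧ ((a n : ℤ) = ⌊(ξ n)⁻¹⌋) ∧ ξ (n + 1) = (ξ n)⁻¹ - (a n : ℝ)

/-- `Q` is the (index-shifted) sequence of denominators of the convergents of the continued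
fraction with partial quotients `a` : `Q (n+1)` is the paper's `q_n`. -/
def IsCFDen (a : ℕ → ℕ) (Q : ℕ → ℤ) : Prop :=
  Q 0 = 0 ∧ Q 1 = 1 ∧ ∀ n, Q (n + 2) = (a n : ℤ) * Q (n + 1) + Q n

lemma Aword_append (u v : List ℕ) : Aword (u ++ v) = Aword u * Aword v := by
  simp [Aword]

lemma wordPrefix_add (w : ℕ → ℕ) (m n : ℕ) :
    wordPrefix w (m + n) = wordPrefix w m ++ (List.range n).map (fun t => w (m + t)) := by
  simp [wordPrefix, List.range_add, List.map_map, Function.comp]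

lemma occursAt_prefix_iff (w : ℕ → ℕ) (n d : ℕ) :
    occursAt w (wordPrefix w n) d ↔ ∀ t < n, w t = w (d + t) := by
  unfold occursAt wordPrefix
  rw [List.length_map, List.length_range]
  constructor
  · intro h t ht
    have h2 := congrArg (fun l : List ℕ => l[t]?) h
    simpa [List.getElem?_map, List.getElem?_range, ht] using h2
  · intro h
    exact List.map_congr_left fun a ha => h a (List.mem_range.mp ha)

lemma isUnit_det_Aword (u : List ℕ) : IsUnit (Aword u).det := by
  induction u with
  | nil => simp [Aword]
  | cons a u ih =>
    have : Aword (a :: u) = Amat a * Aword u := by simp [Aword]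
    rw [this, Matrix.det_mul]
    have hA : (Amat a).det = -1 := by simp [Amat, Matrix.det_fin_two_of]
    rw [hA]
    exact (isUnit_one.neg).mul ih

lemma isUnit_Aword_map {R : Type*} [CommRing R] (u : List ℕ) :
    IsUnit ((Aword u).map (Int.cast : ℤ → R)) := by
  have h : (Aword u).map (Int.cast : ℤ → R) = (Int.castRingHom R).mapMatrix (Aword u) := rfl
  rw [Matrix.isUnit_iff_isUnit_det, h, ← RingHom.map_det]
  exact (isUnit_det_Aword u).map (Int.castRingHom R)

/-- for a recurrent word `w` there is a nonempty prefix `w_m` with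
`A_{w_m} ≡ Id (mod p^k)`. -/
theorem stmt_13 (p : ℕ) [Fact p.Prime] (k : ℕ) (hk : 1 ≤ k)
    (w : ℕ → ℕ) (hrec : Recurrent w) :
    ∃ m : ℕ, 1 ≤ m ∧
      (Aword (wordPrefix w m)).map (Int.cast : ℤ → ZMod (p ^ k)) = 1 := by
  haveI : NeZero (p ^ k) := ⟨pow_ne_zero k (Fact.out (p := p.Prime)).ne_zero⟩
  -- every prefix occurs again at some position ≥ 1
  have key : ∀ L : ℕ, ∃ m, 1 ≤ m ∧ ∀ t < L, w t = w (m + t) := by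
    intro L
    have hfac : IsFactor (wordPrefix w L) w :=
      ⟨0, (occursAt_prefix_iff w L 0).mpr fun t _ => by rw [zero_add]⟩
    obtain ⟨m, hm1, hm2⟩ := hrec (wordPrefix w L) hfac 1
    exact ⟨m, hm1, (occursAt_prefix_iff w L m).mp hm2⟩
  choose f hf1 hf2 using key
  -- the sequence of prefix lengths
  set n : ℕ → ℕ := fun i => Nat.rec 1 (fun _ ni => f ni + ni) i with hn
  have hsucc : ∀ i, n (i + 1) = f (n i) + n i := fun i => rfl
  have hmono : StrictMono n := by
    apply strictMono_nat_of_lt_succ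
    intro i
    have := hf1 (n i)
    rw [hsucc]
    omega
  -- each earlier prefix occurs as a suffix of each later prefix
  have hocc : ∀ i j, i < j → ∀ t < n i, w t = w ((n j - n i) + t) := by
    intro i j hij
    induction j with
    | zero => omega
    | succ j ih =>
      rcases Nat.lt_succ_iff_lt_or_eq.mp hij with hij' | hij'
      · intro t ht
        have hle : n i ≤ n j := (hmono.le_iff_le).mpr (le_of_lt hij')
        have h1 := ih hij' t ht
        have h2 := hf2 (n j) ((n j - n i) + t) (by omega)
        rw [h1, h2]
        congr 1
        rw [hsucc]
        omega
      · subst hij'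
        intro t ht
        have h2 := hf2 (n i) t (by omega)
        rw [h2]
        congr 1
        rw [hsucc]
        omega
  -- pigeonhole on the reductions mod p^k
  set g : ℕ → Matrix (Fin 2) (Fin 2) (ZMod (p ^ k)) :=
    fun i => (Aword (wordPrefix w (n i))).map (Int.cast : ℤ → ZMod (p ^ k)) with hg
  obtain ⟨i, j, hne, heq⟩ := Finite.exists_ne_map_eq_of_infinite g
  -- wlog i < j
  wlog hij : i < j generalizing i j
  · exact this j i (Ne.symm hne) heq.symm (by omega)
  set m : ℕ := n j - n i with hm
  have hnij : n i < n j := hmono hij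
  refine ⟨m, by omega, ?_⟩
  -- the prefix of length n j splits
  have hsplit : wordPrefix w (n j) = wordPrefix w m ++ wordPrefix w (n i) := by
    have h1 : n j = m + n i := by omega
    rw [h1, wordPrefix_add]
    congr 1
    unfold wordPrefix
    refine List.map_congr_left fun a ha => ?_
    rw [hm]
    exact (hocc i j hij a (List.mem_range.mp ha)).symm
  have hAm : Aword (wordPrefix w (n j))
      = Aword (wordPrefix w m) * Aword (wordPrefix w (n i)) := by
    rw [hsplit, Aword_append]
  have hmap : g j = (Aword (wordPrefix w m)).map (Int.cast : ℤ → ZMod (p ^ k)) * g i := by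
    rw [hg]
    simp only
    rw [hAm]
    exact Matrix.map_mul (f := Int.castRingHom (ZMod (p ^ k)))
  have hunit : IsUnit (g i) := isUnit_Aword_map _
  have : (Aword (wordPrefix w m)).map (Int.cast : ℤ → ZMod (p ^ k)) * g i = 1 * g i := by
    rw [one_mul, ← hmap, heq]
  exact hunit.mul_right_cancel this
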